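/- Let u be continuous on the closed upper half-plane, harmonic in the open upper half-plane, satisfying u(z) = O(|z|²) as z → 0, u(z) = O(log|z|) as z → ∞, and ∫_ℝ |u(x)|/x² dx < ∞, with the Poisson representation u(iy) = (y/π)∫_ℝ u(x)/(x² + y²) dx for y > 0. Then ∫_ℝ u(x)/x² dx = 0. -/

import Mathlib

open MeasureTheory Filter

/-- Let `u` be continuous on the closed upper half-plane, harmonic in the open upper
half-plane (i.e. the real part of a holomorphic function there), `u(z) = O(|z|²)` at `0`,
`u(z) = O(log|z|)` at `∞`, `∫ |u(x)|/x² dx < ∞`, satisfying the Poisson representation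
`u(iy) = (y/π)∫ u(x)/(x²+y²) dx`.  Then `∫ u(x)/x² dx = 0`. -/
theorem stmt_7 (u : ℂ → ℝ)
    (hcont : ContinuousOn u {z : ℂ | 0 ≤ z.im})
    (hharm : ∃ F : ℂ → ℂ, DifferentiableOn ℂ F {z : ℂ | 0 < z.im} ∧
      ∀ z ∈ {z : ℂ | 0 < z.im}, u z = (F z).re)
    (h0 : ∃ C δ : ℝ, 0 < δ ∧ ∀ z : ℂ, 0 ≤ z.im → ‖z‖ ≤ δ →
      |u z| ≤ C * ‖z‖ ^ 2)
    (hinf : ∃ C R : ℝ, 0 < R ∧ ∀ z : ℂ, 0 ≤ z.im → R ≤ ‖z‖ →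
      |u z| ≤ C * Real.log (‖z‖))
    (hL1 : Integrable (fun x : ℝ => u x / x ^ 2))
    (hPoisson : ∀ y : ℝ, 0 < y →
      u (Complex.I * y) = (y / Real.pi) * ∫ x : ℝ, u x / (x ^ 2 + y ^ 2)) :
    ∫ x : ℝ, u x / x ^ 2 = 0 := by
  obtain ⟨C, δ, hδ, hC⟩ := h0
  set yn : ℕ → ℝ := fun n => 1 / (n + 1) with hyn
  have hypos : ∀ n, 0 < yn n := fun n => Nat.one_div_pos_of_nat
  have hy0 : Tendsto yn atTop (nhds 0) := tendsto_one_div_add_atTop_nhds_zero_nat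
  have hucont : Continuous fun x : ℝ => u (x : ℂ) := by
    apply hcont.comp_continuous Complex.continuous_ofReal
    intro x; simp [Set.mem_setOf_eq]
  have hae : ∀ᵐ x : ℝ, x ≠ 0 := by
    rw [ae_iff]
    simpa using Real.volume_singleton (x := (0 : ℝ))
  -- the integrals converge
  have hconv : Tendsto (fun n => ∫ x : ℝ, u x / (x ^ 2 + yn n ^ 2)) atTop
      (nhds (∫ x : ℝ, u x / x ^ 2)) := by
    apply tendsto_integral_of_dominated_convergence (fun x : ℝ => |u x / x ^ 2|)
    · intro n
      apply Continuous.aestronglyMeasurable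
      exact hucont.div (by continuity) (fun x => by positivity)
    · exact hL1.abs
    · intro n
      filter_upwards [hae] with x hx
      rw [Real.norm_eq_abs, abs_div, abs_div]
      apply div_le_div_of_nonneg_left (abs_nonneg _) (by positivity)
      rw [abs_of_nonneg (by positivity), abs_of_nonneg (by positivity)]
      nlinarith [sq_nonneg (yn n)]
    · filter_upwards [hae] with x hx
      have hd : Tendsto (fun n => x ^ 2 + yn n ^ 2) atTop (nhds (x ^ 2 + 0 ^ 2)) :=
        tendsto_const_nhds.add (hy0.pow 2)
      have hne : x ^ 2 + (0 : ℝ) ^ 2 ≠ 0 := by positivity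
      simpa [Pi.div_def] using tendsto_const_nhds.div hd hne
  -- LHS tends to 0
  have hlhs : Tendsto (fun n => u (Complex.I * yn n) / yn n) atTop (nhds 0) := by
    rw [tendsto_zero_iff_abs_tendsto_zero]
    have hCyn : Tendsto (fun n => C * yn n) atTop (nhds (C * 0)) := hy0.const_mul C
    rw [mul_zero] at hCyn
    apply squeeze_zero' (Eventually.of_forall fun n => abs_nonneg _) _ hCyn
    filter_upwards [hy0.eventually_le_const hδ] with n hn
    have habs : ‖Complex.I * (yn n : ℂ)‖ = yn n := by
      rw [norm_mul, Complex.norm_I, Complex.norm_real, one_mul, Real.norm_eq_abs, abs_of_pos (hypos n)]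
    have him : (Complex.I * (yn n : ℂ)).im = yn n := by simp
    have := hC (Complex.I * yn n) (by rw [him]; exact (hypos n).le) (by rw [habs]; exact hn)
    rw [habs] at this
    rw [abs_div, abs_of_pos (hypos n), div_le_iff₀ (hypos n)]
    nlinarith [hypos n]
  -- combine
  have heq : ∀ n, ∫ x : ℝ, u x / (x ^ 2 + yn n ^ 2) =
      Real.pi * (u (Complex.I * yn n) / yn n) := by
    intro n
    rw [hPoisson (yn n) (hypos n)]
    field_simp
    rw [mul_div_assoc, mul_comm, div_mul_cancel₀ _ (hypos n).ne']
  have h2 : Tendsto (fun n => ∫ x : ℝ, u x / (x ^ 2 + yn n ^ 2)) atTop (nhds 0) := by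
    rw [funext heq]
    simpa using hlhs.const_mul Real.pi
  exact tendsto_nhds_unique hconv h2
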